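/- arXiv:2209.10253 — 4 statements merged into one kernel-verified Lean document; each statement's English description precedes it below -/
import Mathlib

section
/- If A ⊆ ℕ is piecewise syndetic, then for every finite set F of polynomials with integer coefficients, zero constant term, and mapping ℕ into ℕ, and for every IP-set generated by a sequence ⟨x_n⟩ in ℕ (i.e., the set of all finite sums of distinct terms), there exist a ∈ ℕ and a nonempty finite set β ⊆ ℕ such that a + P(∑_{t∈β} x_t) ∈ A for all P ∈ F. -/
open Polynomial Finset


/-- A polynomial over ℤ is admissible if it has zero constant term and maps ℕ into ℕ. -/
def IsAdmissible (P : Polynomial ℤ) : Prop :=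
  P.eval 0 = 0 ∧ ∀ n : ℕ, 0 ≤ P.eval (n : ℤ)

/-- A ⊆ ℕ is a J_p-set. -/
def JpSet (A : Set ℕ) : Prop :=
  ∀ F : Finset (Polynomial ℤ), (∀ P ∈ F, IsAdmissible P) →
  ∀ l : ℕ, ∀ x : Fin l → ℕ → ℕ,
  ∃ a : ℕ, ∃ β : Finset ℕ, β.Nonempty ∧
    ∀ P ∈ F, ∀ i : Fin l,
      ((a : ℤ) + P.eval ((∑ t ∈ β, x i t : ℕ) : ℤ)).toNat ∈ A

/-- A ⊆ ℕ is piecewise syndetic. -/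
def PiecewiseSyndetic (A : Set ℕ) : Prop :=
  ∃ G : Finset ℕ, ∀ n : ℕ, ∃ m : ℕ, ∀ k < n, ∃ g ∈ G, (m + k) + g ∈ A

namespace IPVDW

noncomputable section
open scoped Classical

/-- sum of the sequence `x` over the finite index set `β`, as an integer. -/
def xval (x : ℕ → ℕ) (β : Finset ℕ) : ℤ := ((∑ t ∈ β, x t : ℕ) : ℤ)

/-- the monochromatic-pattern existence predicate. -/
def Pat (x : ℕ → ℕ) {κ : Type} (χ : ℤ → κ) (F : Finset (Polynomial ℤ))
    (M L N : ℕ) : Prop :=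
  ∃ a : ℤ, ∃ β : Finset ℕ, β.Nonempty ∧ β ⊆ Finset.Ico M L ∧ a.natAbs ≤ N ∧
    ∀ p ∈ F, (a - p.eval (xval x β)).natAbs ≤ N ∧ χ (a - p.eval (xval x β)) = χ a

/-- the finitary IP polynomial van der Waerden statement for the family `F`. -/
def TT (F : Finset (Polynomial ℤ)) : Prop :=
  ∀ (κ : Type) (_ : Fintype κ) (x : ℕ → ℕ) (M : ℕ),
    ∃ L N : ℕ, M ≤ L ∧ ∀ χ : ℤ → κ, Pat x χ F M L N

/-- leading coefficients of the degree-`e` members. -/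
def leads (F : Finset (Polynomial ℤ)) (e : ℕ) : Finset ℤ :=
  (F.filter fun p => p.natDegree = e ∧ p ≠ 0).image Polynomial.leadingCoeff

def mu (F : Finset (Polynomial ℤ)) (e : ℕ) : ℕ := (leads F e).card

/-- the PET ordering on families. -/
def Rel (F' F : Finset (Polynomial ℤ)) : Prop :=
  ∃ d, mu F' d < mu F d ∧ ∀ e, d < e → mu F' e ≤ mu F e

lemma mu_bound {F : Finset (Polynomial ℤ)} {e : ℕ} (h : mu F e ≠ 0) :
    e ≤ F.sup Polynomial.natDegree := by
  obtain ⟨c, hc⟩ := Finset.card_pos.mp (Nat.pos_of_ne_zero h)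
  rw [leads, Finset.mem_image] at hc
  obtain ⟨p, hp, -⟩ := hc
  rw [Finset.mem_filter] at hp
  exact hp.2.1 ▸ Finset.le_sup hp.1

lemma rel_acc : ∀ F, Acc Rel F := by
  have lexwf : ∀ D : ℕ, WellFounded
      (Pi.Lex (· < ·) (@fun _ : Fin (D+1) => ((· < ·) : ℕ → ℕ → Prop))) := fun D =>
    Pi.Lex.wellFounded _ (fun _ => Nat.lt_wfRel.wf)
  intro F
  set D := F.sup Polynomial.natDegree with hD
  have key : ∀ G G' : Finset (Polynomial ℤ), (∀ e, mu G e ≠ 0 → e ≤ D) → Rel G' G →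
      (Pi.Lex (· < ·) (@fun _ : Fin (D+1) => ((· < ·) : ℕ → ℕ → Prop))
        (fun i => mu G' (D - i)) (fun i => mu G (D - i))) ∧
      (∀ e, mu G' e ≠ 0 → e ≤ D) := by
    intro G G' hb ⟨d, hd, habove⟩
    have hdD : d ≤ D := hb d (by omega)
    have hb' : ∀ e, mu G' e ≠ 0 → e ≤ D := by
      intro e he
      by_contra hc
      push_neg at hc
      have h1 : d < e := by omega
      have := habove e h1
      have := hb e
      omega
    refine ⟨?_, hb'⟩
    -- find minimal differing index
    have hne : ∃ i : Fin (D+1), mu G' (D - (i:ℕ)) ≠ mu G (D - (i:ℕ)) := by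
      refine ⟨⟨D - d, by omega⟩, ?_⟩
      simp only
      have : D - (D - d) = d := by omega
      rw [this]; omega
    classical
    obtain ⟨i, hi, hmin⟩ := Finset.exists_min_image
      (Finset.univ.filter fun i : Fin (D+1) => mu G' (D - (i:ℕ)) ≠ mu G (D - (i:ℕ)))
      id (by obtain ⟨i, hi⟩ := hne; exact ⟨i, Finset.mem_filter.mpr ⟨Finset.mem_univ _, hi⟩⟩)
    rw [Finset.mem_filter] at hi
    refine ⟨i, ?_, ?_⟩
    · intro j hj
      by_contra hc
      have := hmin j (Finset.mem_filter.mpr ⟨Finset.mem_univ _, hc⟩)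
      simp only [id] at this
      exact absurd hj (not_lt.mpr this)
    · show mu G' (D - (i:ℕ)) < mu G (D - (i:ℕ))
      have hile : (i : ℕ) ≤ D - d := by
        have := hmin ⟨D - d, by omega⟩ (Finset.mem_filter.mpr ⟨Finset.mem_univ _, by
          simp only
          have : D - (D - d) = d := by omega
          rw [this]; omega⟩)
        exact this
      have hdege : d ≤ D - (i : ℕ) := by omega
      rcases eq_or_lt_of_le hdege with h | h
      · rw [← h]; exact hd
      · exact lt_of_le_of_ne (habove _ h) hi.2
  -- now transfer accessibility
  have trans : ∀ v, Acc (Pi.Lex (· < ·) (@fun _ : Fin (D+1) => ((· < ·) : ℕ → ℕ → Prop))) v →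
      ∀ G, (∀ e, mu G e ≠ 0 → e ≤ D) → (fun i : Fin (D+1) => mu G (D - (i:ℕ))) = v →
      Acc Rel G := by
    intro v hv
    induction hv with
    | intro v _ ih =>
      rintro G hb rfl
      constructor
      intro G' hrel
      obtain ⟨hlex, hb'⟩ := key G G' hb hrel
      exact ih _ hlex G' hb' rfl
  exact trans _ ((lexwf D).apply _) F (fun e he => mu_bound he) rfl


lemma one_le_natDegree_of_ne_zero {p : Polynomial ℤ} (hp : p ≠ 0) (h : p.eval 0 = 0) :
    1 ≤ p.natDegree := by
  by_contra h'
  push_neg at h'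
  have h0 : p.natDegree = 0 := by omega
  have hC := Polynomial.eq_C_of_natDegree_eq_zero h0
  rw [hC] at h
  simp at h
  rw [hC, h] at hp
  simp at hp

/-- the derived polynomial. -/
def qq (p₀ : Polynomial ℤ) (s : ℤ) (p : Polynomial ℤ) : Polynomial ℤ :=
  (p.comp (X + C s) - C (p.eval s)) - p₀

lemma qq_eval (p₀ p : Polynomial ℤ) (s t : ℤ) :
    (qq p₀ s p).eval t = p.eval (t + s) - p.eval s - p₀.eval t := by
  simp [qq, eval_comp]

lemma cc_natDegree (p : Polynomial ℤ) (s : ℤ) :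
    (p.comp (X + C s) - C (p.eval s)).natDegree = p.natDegree := by
  rw [natDegree_sub_C, natDegree_comp, natDegree_X_add_C, mul_one]

lemma cc_leadingCoeff {p : Polynomial ℤ} (s : ℤ) (h1 : 1 ≤ p.natDegree) :
    (p.comp (X + C s) - C (p.eval s)).leadingCoeff = p.leadingCoeff := by
  have hdeg := cc_natDegree p s
  rw [Polynomial.leadingCoeff, hdeg, Polynomial.coeff_sub, Polynomial.coeff_C,
    if_neg (by omega)]
  have hcomp : (p.comp (X + C s)).natDegree = p.natDegree := by
    rw [natDegree_comp, natDegree_X_add_C, mul_one]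
  rw [sub_zero, ← hcomp, Polynomial.coeff_natDegree,
    Polynomial.leadingCoeff_comp (by rw [natDegree_X_add_C]; exact one_ne_zero),
    leadingCoeff_X_add_C, one_pow, mul_one]

lemma cc_ne_zero {p : Polynomial ℤ} (s : ℤ) (h1 : 1 ≤ p.natDegree) :
    p.comp (X + C s) - C (p.eval s) ≠ 0 := by
  intro h
  have := cc_leadingCoeff s h1
  rw [h] at this
  have hp : p ≠ 0 := by
    intro h'; rw [h'] at h1; simp at h1
  exact hp (Polynomial.leadingCoeff_eq_zero.mp (by rw [← this]; simp))

lemma qq_deg_gt {p₀ p : Polynomial ℤ} (s : ℤ) (h1 : 1 ≤ p.natDegree)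
    (hgt : p₀.natDegree < p.natDegree) :
    (qq p₀ s p).natDegree = p.natDegree ∧ (qq p₀ s p).leadingCoeff = p.leadingCoeff := by
  have hcc := cc_natDegree p s
  have hccl := cc_leadingCoeff s h1
  have hccne := cc_ne_zero s h1
  have hdlt : p₀.degree < (p.comp (X + C s) - C (p.eval s)).degree := by
    rcases eq_or_ne p₀ 0 with h | h
    · rw [h, Polynomial.degree_zero]
      exact lt_of_lt_of_le (WithBot.bot_lt_iff_ne_bot.mpr
        (by rwa [Ne, Polynomial.degree_eq_bot])) le_rfl
    · rw [Polynomial.degree_eq_natDegree h, Polynomial.degree_eq_natDegree hccne, hcc]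
      exact_mod_cast hgt
  constructor
  · have := Polynomial.degree_sub_eq_left_of_degree_lt hdlt
    rw [qq]
    rw [Polynomial.natDegree, this, ← Polynomial.natDegree, hcc]
  · rw [qq, Polynomial.leadingCoeff_sub_of_degree_lt hdlt, hccl]

lemma qq_coeff_eq {p₀ p : Polynomial ℤ} (s : ℤ) (h1 : 1 ≤ p.natDegree)
    (heq : p.natDegree = p₀.natDegree) :
    (qq p₀ s p).natDegree ≤ p₀.natDegree ∧
    (qq p₀ s p).coeff p₀.natDegree = p.leadingCoeff - p₀.leadingCoeff := by
  have hcc := cc_natDegree p s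
  constructor
  · refine le_trans (Polynomial.natDegree_sub_le _ _) ?_
    rw [hcc, heq]
    simp
  · rw [qq, Polynomial.coeff_sub, ← heq, ← hcc, Polynomial.coeff_natDegree,
      cc_leadingCoeff s h1, hcc, heq, Polynomial.coeff_natDegree]


lemma derived_zero_const {F₁ : Finset (Polynomial ℤ)} (h0 : ∀ p ∈ F₁, p.eval 0 = 0)
    {p₀ : Polynomial ℤ} (hp₀F : p₀ ∈ F₁) {S : Finset ℤ} :
    ∀ q ∈ (S ×ˢ F₁).image fun sp => qq p₀ sp.1 sp.2, q.eval 0 = 0 := by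
  intro q hq
  rw [Finset.mem_image] at hq
  obtain ⟨⟨s, p⟩, hmem, rfl⟩ := hq
  rw [Finset.mem_product] at hmem
  rw [qq_eval, zero_add, h0 _ hp₀F]
  ring

lemma derived_rel (F : Finset (Polynomial ℤ)) (h0 : ∀ p ∈ F, p.eval 0 = 0)
    (F₁ : Finset (Polynomial ℤ)) (hF₁ : F₁ = F.filter fun p => p ≠ 0)
    (p₀ : Polynomial ℤ) (hp₀ : p₀ ∈ F₁) (hmin : ∀ p ∈ F₁, p₀.natDegree ≤ p.natDegree)
    (S : Finset ℤ) :
    Rel ((S ×ˢ F₁).image fun sp => qq p₀ sp.1 sp.2) F := by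
  set F' := (S ×ˢ F₁).image fun sp => qq p₀ sp.1 sp.2 with hF'
  set d₀ := p₀.natDegree with hd₀def
  have hp₀ne : p₀ ≠ 0 := by rw [hF₁] at hp₀; exact (Finset.mem_filter.mp hp₀).2
  have hp₀F : p₀ ∈ F := by rw [hF₁] at hp₀; exact (Finset.mem_filter.mp hp₀).1
  have hd₀ : 1 ≤ d₀ := one_le_natDegree_of_ne_zero hp₀ne (h0 _ hp₀F)
  have hmuF : ∀ e, leads F₁ e = leads F e := by
    intro e
    rw [hF₁, leads, leads, Finset.filter_filter]
    congr 1
    ext p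
    simp only [Finset.mem_filter]
    tauto
  have hclass : ∀ (e : ℕ), ∀ c ∈ leads F' e,
      (d₀ < e → c ∈ leads F₁ e) ∧
      (e = d₀ → c ∈ ((leads F₁ d₀).erase p₀.leadingCoeff).image
        (fun y => y - p₀.leadingCoeff)) := by
    intro e c hc
    rw [leads, Finset.mem_image] at hc
    obtain ⟨q', hq', rfl⟩ := hc
    rw [Finset.mem_filter] at hq'
    obtain ⟨hq'F', hdeg, hqne⟩ := hq'
    rw [hF', Finset.mem_image] at hq'F'
    obtain ⟨⟨s, p⟩, hsp, rfl⟩ := hq'F'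
    rw [Finset.mem_product] at hsp
    obtain ⟨hs, hpF₁⟩ := hsp
    replace hdeg : (qq p₀ s p).natDegree = e := hdeg
    replace hqne : qq p₀ s p ≠ 0 := hqne
    have hpne : p ≠ 0 := by rw [hF₁] at hpF₁; exact (Finset.mem_filter.mp hpF₁).2
    have hpF : p ∈ F := by rw [hF₁] at hpF₁; exact (Finset.mem_filter.mp hpF₁).1
    have h1p : 1 ≤ p.natDegree := one_le_natDegree_of_ne_zero hpne (h0 _ hpF)
    have hminp : d₀ ≤ p.natDegree := hmin p hpF₁
    rcases lt_or_eq_of_le hminp with hgt | heqd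
    · obtain ⟨hd, hl⟩ := qq_deg_gt s h1p hgt
      constructor
      · intro _
        rw [leads, Finset.mem_image]
        exact ⟨p, Finset.mem_filter.mpr ⟨hpF₁, by omega, hpne⟩, hl.symm⟩
      · intro he; exfalso; omega
    · obtain ⟨hle, hcoeff⟩ := qq_coeff_eq s h1p heqd.symm
      by_cases hlead : p.leadingCoeff = p₀.leadingCoeff
      · have hnd : (qq p₀ s p).natDegree ≠ d₀ := by
          intro hqd
          have hlc : (qq p₀ s p).leadingCoeff = 0 := by
            rw [Polynomial.leadingCoeff, hqd, hcoeff, hlead, sub_self]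
          exact hqne (Polynomial.leadingCoeff_eq_zero.mp hlc)
        constructor
        · intro h; exfalso; omega
        · intro he; exact absurd (hdeg.trans he) hnd
      · have hqdeg : (qq p₀ s p).natDegree = d₀ :=
          le_antisymm hle (Polynomial.le_natDegree_of_ne_zero
            (by rw [hcoeff]; exact sub_ne_zero.mpr hlead))
        have hql : (qq p₀ s p).leadingCoeff = p.leadingCoeff - p₀.leadingCoeff := by
          rw [Polynomial.leadingCoeff, hqdeg, hcoeff]
        constructor
        · intro he; exfalso; omega
        · intro _
          rw [Finset.mem_image]
          refine ⟨p.leadingCoeff, Finset.mem_erase.mpr ⟨hlead, ?_⟩, hql.symm⟩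
          rw [leads, Finset.mem_image]
          exact ⟨p, Finset.mem_filter.mpr ⟨hpF₁, heqd.symm, hpne⟩, rfl⟩
  have hc₀mem : p₀.leadingCoeff ∈ leads F₁ d₀ := by
    rw [leads, Finset.mem_image]
    exact ⟨p₀, Finset.mem_filter.mpr ⟨hp₀, rfl, hp₀ne⟩, rfl⟩
  refine ⟨d₀, ?_, ?_⟩
  · have h1 : leads F' d₀ ⊆ ((leads F₁ d₀).erase p₀.leadingCoeff).image
        (fun y => y - p₀.leadingCoeff) := fun c hc => (hclass d₀ c hc).2 rfl
    have h2 : mu F' d₀ ≤ ((leads F₁ d₀).erase p₀.leadingCoeff).card :=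
      le_trans (Finset.card_le_card h1) (Finset.card_image_le)
    have h3 : ((leads F₁ d₀).erase p₀.leadingCoeff).card < (leads F₁ d₀).card :=
      Finset.card_erase_lt_of_mem hc₀mem
    have h4 : mu F d₀ = (leads F₁ d₀).card := by rw [mu, hmuF]
    omega
  · intro e he
    have h1 : leads F' e ⊆ leads F₁ e := fun c hc => (hclass e c hc).1 he
    rw [mu, mu, ← hmuF]
    exact Finset.card_le_card h1


lemma xval_union {x : ℕ → ℕ} {β γ : Finset ℕ} (h : Disjoint β γ) :
    xval x (β ∪ γ) = xval x β + xval x γ := by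
  simp [xval, Finset.sum_union h]

lemma snoc_injective {n : ℕ} {κ : Type} {g : Fin n → κ} {c : κ}
    (hg : Function.Injective g) (hc : ∀ i, g i ≠ c) :
    Function.Injective (Fin.snoc g c : Fin (n+1) → κ) := by
  intro i j h
  induction i using Fin.lastCases with
  | last =>
    induction j using Fin.lastCases with
    | last => rfl
    | cast j =>
      rw [Fin.snoc_last, Fin.snoc_castSucc] at h
      exact absurd h.symm (hc j)
  | cast i =>
    induction j using Fin.lastCases with
    | last =>
      rw [Fin.snoc_last, Fin.snoc_castSucc] at h
      exact absurd h (hc i)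
    | cast j =>
      rw [Fin.snoc_castSucc, Fin.snoc_castSucc] at h
      rw [hg h]

theorem mainT : ∀ F : Finset (Polynomial ℤ), (∀ p ∈ F, p.eval 0 = 0) → TT F := by
  intro F
  induction (rel_acc F) with
  | intro F hacc IH =>
  intro h0 κ instK x M
  haveI := instK
  classical
  set F₁ := F.filter (fun p => p ≠ 0) with hF₁
  by_cases hypF₁ : F₁ = ∅
  · -- trivial base case : only the zero polynomial
    refine ⟨M + 1, 0, by omega, fun χ => ?_⟩
    refine ⟨0, {M}, Finset.singleton_nonempty M,
      by simp [Finset.singleton_subset_iff, Finset.mem_Ico], by simp, ?_⟩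
    intro p hp
    have hp0 : p = 0 := by
      by_contra hne
      have hmem : p ∈ F₁ := by rw [hF₁]; exact Finset.mem_filter.mpr ⟨hp, hne⟩
      rw [hypF₁] at hmem
      exact absurd hmem (Finset.notMem_empty p)
    subst hp0
    simp
  · have hF₁ne : F₁.Nonempty := Finset.nonempty_iff_ne_empty.mpr hypF₁
    obtain ⟨p₀, hp₀mem, hp₀min⟩ := Finset.exists_min_image F₁ Polynomial.natDegree hF₁ne
    have hF₁sub : ∀ p ∈ F₁, p ∈ F ∧ p ≠ 0 := by
      intro p hp
      rw [hF₁] at hp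
      exact Finset.mem_filter.mp hp
    -- the color-focusing induction
    have focus : ∀ u : ℕ, ∀ M : ℕ, ∃ L N : ℕ, M ≤ L ∧ ∀ χ : ℤ → κ,
        Pat x χ F₁ M L N ∨
        (∃ f : ℤ, ∃ Bh : Fin u → Finset ℕ, ∃ γf : Fin u → κ,
          (∀ i, (Bh i).Nonempty) ∧ (∀ i, Bh i ⊆ Finset.Ico M L) ∧
          Function.Injective γf ∧ (∀ i, γf i ≠ χ f) ∧
          f.natAbs ≤ N ∧
          (∀ i, ∀ p ∈ F₁, (f - p.eval (xval x (Bh i))).natAbs ≤ N ∧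
            χ (f - p.eval (xval x (Bh i))) = γf i)) := by
      intro u
      induction u with
      | zero =>
        intro M
        exact ⟨M, 0, le_rfl, fun χ => Or.inr ⟨0, Fin.elim0, Fin.elim0,
          fun i => i.elim0, fun i => i.elim0, fun i j => i.elim0, fun i => i.elim0,
          by simp, fun i => i.elim0⟩⟩
      | succ u Fu =>
        intro M
        obtain ⟨L₁, N₁, hML₁, H₁⟩ := Fu M
        set Sig : Finset ℤ := (Finset.Ico M L₁).powerset.image (fun γ => xval x γ) with hSig
        set F' := (Sig ×ˢ F₁).image (fun sp => qq p₀ sp.1 sp.2) with hF'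
        have hTT' : TT F' := IH F' (derived_rel F h0 F₁ hF₁ p₀ hp₀mem hp₀min Sig)
          (derived_zero_const (fun p hp => h0 p (hF₁sub p hp).1) hp₀mem)
        set O : Finset ℤ := Finset.Icc (-(N₁ : ℤ)) (N₁ : ℤ) with hO
        obtain ⟨L₂, N₂, hL₁L₂, H₂⟩ := hTT' (↥O → κ) inferInstance x L₁
        set GG : Finset (Polynomial ℤ) := (F₁ ∪ F') ∪ {p₀} with hGG
        set V : ℕ := ((Finset.Ico M L₂).powerset).sup
          (fun γ => GG.sup (fun p => (p.eval (xval x γ)).natAbs)) with hV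
        have hVb : ∀ p ∈ GG, ∀ γ ⊆ Finset.Ico M L₂, (p.eval (xval x γ)).natAbs ≤ V := by
          intro p hp γ hγ
          refine le_trans (Finset.le_sup (f := fun p => (p.eval (xval x γ)).natAbs) hp) ?_
          rw [hV]
          exact Finset.le_sup (f := fun γ => GG.sup (fun p => (p.eval (xval x γ)).natAbs))
            (Finset.mem_powerset.mpr hγ)
        have hp₀GG : p₀ ∈ GG := by
          rw [hGG]
          exact Finset.mem_union_right _ (Finset.mem_singleton_self p₀)
        have hF'GG : ∀ q ∈ F', q ∈ GG := by
          intro q hq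
          rw [hGG]
          exact Finset.mem_union_left _ (Finset.mem_union_right _ hq)
        refine ⟨L₂, N₁ + N₂ + V, by omega, ?_⟩
        intro χ
        obtain ⟨b, γ', hγ'ne, hγ'sub, hbN₂, hpat'⟩ := H₂ (fun w => fun o : ↥O => χ (w + (o : ℤ)))
        set t : ℤ := xval x γ' with ht
        have hγ'M : γ' ⊆ Finset.Ico M L₂ :=
          subset_trans hγ'sub (Finset.Ico_subset_Ico (by omega) le_rfl)
        have dagger : ∀ s ∈ Sig, ∀ p ∈ F₁, ∀ o : ℤ, o.natAbs ≤ N₁ →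
            χ (b - (qq p₀ s p).eval t + o) = χ (b + o) := by
          intro s hs p hp o ho
          have hqmem : qq p₀ s p ∈ F' := by
            rw [hF', Finset.mem_image]
            exact ⟨(s, p), Finset.mem_product.mpr ⟨hs, hp⟩, rfl⟩
          have h2 := (hpat' _ hqmem).2
          have hoO : o ∈ O := by rw [hO, Finset.mem_Icc]; omega
          exact congrFun h2 ⟨o, hoO⟩
        have hqbound : ∀ s ∈ Sig, ∀ p ∈ F₁, ((qq p₀ s p).eval t).natAbs ≤ V := by
          intro s hs p hp
          refine hVb _ (hF'GG _ ?_) γ' hγ'M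
          rw [hF', Finset.mem_image]
          exact ⟨(s, p), Finset.mem_product.mpr ⟨hs, hp⟩, rfl⟩
        rcases H₁ (fun z => χ (z + b)) with win | str
        · -- translate an early win
          left
          obtain ⟨ah, β, hβne, hβsub, hah, hpts⟩ := win
          refine ⟨ah + b, β, hβne,
            subset_trans hβsub (Finset.Ico_subset_Ico le_rfl (by omega)), by omega, ?_⟩
          intro p hp
          obtain ⟨h1, h2⟩ := hpts p hp
          have heq : ah + b - p.eval (xval x β) = (ah - p.eval (xval x β)) + b := by ring
          rw [heq]
          exact ⟨by omega, h2⟩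
        · obtain ⟨fh, Bh, γf, hBne, hBsub, hγinj, hγne, hfh, hstr⟩ := str
          set Fstar : ℤ := fh + b + p₀.eval t with hFstar
          set Bh' : Fin (u+1) → Finset ℕ := Fin.snoc (fun i => Bh i ∪ γ') γ' with hBh'
          set γnew : Fin (u+1) → κ := Fin.snoc γf (χ (fh + b)) with hγnew
          have hdisj : ∀ i : Fin u, Disjoint (Bh i) γ' := by
            intro i
            refine Finset.disjoint_left.mpr (fun a ha ha' => ?_)
            have h1 := hBsub i ha
            have h2 := hγ'sub ha'
            rw [Finset.mem_Ico] at h1 h2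
            omega
          have hsum : ∀ i : Fin u, xval x (Bh i ∪ γ') = xval x (Bh i) + t :=
            fun i => xval_union (hdisj i)
          have hSmem : ∀ i : Fin u, xval x (Bh i) ∈ Sig := by
            intro i
            rw [hSig, Finset.mem_image]
            exact ⟨Bh i, Finset.mem_powerset.mpr (hBsub i), rfl⟩
          have h0Sig : (0:ℤ) ∈ Sig := by
            rw [hSig, Finset.mem_image]
            exact ⟨∅, Finset.mem_powerset.mpr (Finset.empty_subset _), by simp [xval]⟩
          have hp₀V : (p₀.eval t).natAbs ≤ V := by
            have := hVb p₀ hp₀GG γ' hγ'M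
            rw [ht]
            exact this
          have key : ∀ i : Fin (u+1), ∀ p ∈ F₁,
              (Fstar - p.eval (xval x (Bh' i))).natAbs ≤ N₁ + N₂ + V ∧
              χ (Fstar - p.eval (xval x (Bh' i))) = γnew i := by
            intro i
            induction i using Fin.lastCases with
            | last =>
              intro p hp
              have hpzc : p.eval 0 = 0 := h0 p (hF₁sub p hp).1
              have hBlast : Bh' (Fin.last u) = γ' := by rw [hBh']; simp [Fin.snoc_last]
              have hγlast : γnew (Fin.last u) = χ (fh + b) := by rw [hγnew]; simp [Fin.snoc_last]
              have hq0 : (qq p₀ 0 p).eval t = p.eval t - p₀.eval t := by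
                rw [qq_eval, hpzc]
                ring_nf
              have heq : Fstar - p.eval t = b - (qq p₀ 0 p).eval t + fh := by
                rw [hq0, hFstar]; ring
              rw [hBlast, ← ht, heq, hγlast]
              constructor
              · have hb1 := hqbound 0 h0Sig p hp
                omega
              · rw [dagger 0 h0Sig p hp fh hfh, add_comm b fh]
            | cast j =>
              intro p hp
              have hBj : Bh' (Fin.castSucc j) = Bh j ∪ γ' := by
                rw [hBh']; simp [Fin.snoc_castSucc]
              have hγj : γnew (Fin.castSucc j) = γf j := by
                rw [hγnew]; simp [Fin.snoc_castSucc]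
              obtain ⟨hb1, hb2⟩ := hstr j p hp
              have hqe : (qq p₀ (xval x (Bh j)) p).eval t
                  = p.eval (xval x (Bh j) + t) - p.eval (xval x (Bh j)) - p₀.eval t := by
                rw [qq_eval, add_comm t (xval x (Bh j))]
              have heq : Fstar - p.eval (xval x (Bh j) + t)
                  = b - (qq p₀ (xval x (Bh j)) p).eval t + (fh - p.eval (xval x (Bh j))) := by
                rw [hqe, hFstar]; ring
              rw [hBj, hsum j, heq, hγj]
              constructor
              · have hq1 := hqbound _ (hSmem j) p hp
                omega
              · rw [dagger _ (hSmem j) p hp _ hb1, add_comm b (fh - p.eval (xval x (Bh j)))]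
                exact hb2
          have hBh'ne : ∀ i : Fin (u+1), (Bh' i).Nonempty := by
            intro i
            induction i using Fin.lastCases with
            | last => rw [hBh']; simpa [Fin.snoc_last] using hγ'ne
            | cast j =>
              rw [hBh']
              simp only [Fin.snoc_castSucc]
              exact Finset.Nonempty.mono Finset.subset_union_right hγ'ne
          have hBh'sub : ∀ i : Fin (u+1), Bh' i ⊆ Finset.Ico M L₂ := by
            intro i
            induction i using Fin.lastCases with
            | last =>
              rw [hBh']
              simpa [Fin.snoc_last] using hγ'M
            | cast j =>
              rw [hBh']
              simp only [Fin.snoc_castSucc]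
              refine Finset.union_subset ?_ hγ'M
              exact subset_trans (hBsub j) (Finset.Ico_subset_Ico le_rfl (by omega))
          have hFstarB : Fstar.natAbs ≤ N₁ + N₂ + V := by
            rw [hFstar]
            omega
          by_cases hwin : ∃ i : Fin (u+1), γnew i = χ Fstar
          · left
            obtain ⟨i, hi⟩ := hwin
            refine ⟨Fstar, Bh' i, hBh'ne i, hBh'sub i, hFstarB, ?_⟩
            intro p hp
            obtain ⟨hb, hcol⟩ := key i p hp
            exact ⟨hb, by rw [hcol, hi]⟩
          · right
            push_neg at hwin
            have hγninj : Function.Injective γnew := by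
              rw [hγnew]
              refine snoc_injective hγinj ?_
              intro i
              exact hγne i
            exact ⟨Fstar, Bh', γnew, hBh'ne, hBh'sub, hγninj, hwin, hFstarB, key⟩
    -- conclude TT F via pigeonhole
    obtain ⟨L, N, hML, H⟩ := focus (Fintype.card κ) M
    refine ⟨L, N, hML, fun χ => ?_⟩
    rcases H χ with win | str
    · obtain ⟨a, β, h1, h2, h3, h4⟩ := win
      refine ⟨a, β, h1, h2, h3, fun p hp => ?_⟩
      by_cases hpz : p = 0
      · subst hpz
        simpa using h3
      · exact h4 p (by rw [hF₁]; exact Finset.mem_filter.mpr ⟨hp, hpz⟩)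
    · exfalso
      obtain ⟨f, Bh, γf, _, _, hinj, hne', _, _⟩ := str
      have hinj' : Function.Injective (Fin.snoc γf (χ f) : Fin (Fintype.card κ + 1) → κ) :=
        snoc_injective hinj hne'
      have hcard := Fintype.card_le_of_injective _ hinj'
      rw [Fintype.card_fin] at hcard
      omega

end
end IPVDW

theorem ip_polynomial_vdw_single (A : Set ℕ) (hA : PiecewiseSyndetic A)
    (F : Finset (Polynomial ℤ)) (hF : ∀ P ∈ F, IsAdmissible P)
    (x : ℕ → ℕ) :
    ∃ a : ℕ, ∃ β : Finset ℕ, β.Nonempty ∧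
      ∀ P ∈ F, ((a : ℤ) + P.eval ((∑ t ∈ β, x t : ℕ) : ℤ)).toNat ∈ A := by
  classical
  obtain ⟨G, hG⟩ := hA
  by_cases hGne : G.Nonempty
  swap
  · obtain ⟨m, hm⟩ := hG 1
    obtain ⟨g, hg, -⟩ := hm 0 (by omega)
    rw [Finset.not_nonempty_iff_eq_empty] at hGne
    rw [hGne] at hg
    exact absurd hg (Finset.notMem_empty g)
  · set Ft := F.image (fun P => -P) with hFt
    have h0 : ∀ p ∈ Ft, p.eval 0 = 0 := by
      intro p hp
      rw [hFt, Finset.mem_image] at hp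
      obtain ⟨P, hP, rfl⟩ := hp
      simp [(hF P hP).1]
    obtain ⟨L, N, hML, H⟩ := IPVDW.mainT Ft h0 {g // g ∈ G} inferInstance x 0
    obtain ⟨m, hm⟩ := hG (2 * N + 1)
    have hsel : ∀ k : ℕ, ∃ g : {g // g ∈ G}, (k < 2 * N + 1 → m + k + (g : ℕ) ∈ A) := by
      intro k
      by_cases hk : k < 2 * N + 1
      · obtain ⟨g, hg, hmem⟩ := hm k hk
        exact ⟨⟨g, hg⟩, fun _ => hmem⟩
      · exact ⟨⟨hGne.choose, hGne.choose_spec⟩, fun h => absurd h hk⟩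
    set χ : ℤ → {g // g ∈ G} := fun z => (hsel (z + N).toNat).choose with hχ
    have hχdef : ∀ z : ℤ, z.natAbs ≤ N → m + (z + N).toNat + ((χ z : ℕ)) ∈ A := by
      intro z hzb
      rw [hχ]
      exact (hsel (z + N).toNat).choose_spec (by omega)
    obtain ⟨a, β, hβne, hβsub, haN, hpts⟩ := H χ
    refine ⟨(m + N + a + ((χ a : ℕ) : ℤ)).toNat, β, hβne, ?_⟩
    intro P hP
    have hmem : -P ∈ Ft := by rw [hFt, Finset.mem_image]; exact ⟨P, hP, rfl⟩
    obtain ⟨hb, hcol⟩ := hpts (-P) hmem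
    have hsval : IPVDW.xval x β = ((∑ t ∈ β, x t : ℕ) : ℤ) := rfl
    have hz : a - Polynomial.eval (IPVDW.xval x β) (-P)
        = a + Polynomial.eval (IPVDW.xval x β) P := by
      simp
    rw [hz] at hb hcol
    have hPs : 0 ≤ Polynomial.eval (IPVDW.xval x β) P := by
      rw [hsval]
      exact (hF P hP).2 (∑ t ∈ β, x t)
    have hAz := hχdef (a + Polynomial.eval (IPVDW.xval x β) P) hb
    rw [hcol] at hAz
    have hfinal : (((m + N + a + ((χ a : ℕ) : ℤ)).toNat : ℤ)
        + Polynomial.eval ((∑ t ∈ β, x t : ℕ) : ℤ) P).toNat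
        = m + ((a + Polynomial.eval (IPVDW.xval x β) P) + N).toNat + ((χ a : ℕ)) := by
      rw [← hsval]
      omega
    rw [hfinal]
    exact hAz
end

section
/- If A ⊆ ℕ is a J_p-set and n is a nonzero integer (say n ∈ ℕ, n ≥ 1), then n·A = {n·a : a ∈ A} is a J_p-set. -/
open Polynomial

theorem jpSet_mul (A : Set ℕ) (hA : JpSet A) (n : ℕ) (hn : 1 ≤ n) :
    JpSet ((fun a => n * a) '' A) := by
  classical
  intro F hF l x
  have hn0 : n ≠ 0 := by omega
  haveI : NeZero n := ⟨hn0⟩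
  -- partial sums
  set S : Fin l → ℕ → ℕ := fun i m => ∑ j ∈ Finset.range m, x i j with hSdef
  -- pigeonhole: infinitely many m with same residue vector of partial sums mod n
  obtain ⟨v, hv⟩ :=
    Finite.exists_infinite_fiber (fun m : ℕ => (fun i : Fin l => ((S i m : ZMod n))))
  set p : ℕ → Prop := fun m => (fun i : Fin l => ((S i m : ZMod n))) = v with hpdef
  have hp : (setOf p).Infinite := Set.infinite_coe_iff.mp hv
  set φ : ℕ → ℕ := fun k => Nat.nth p k with hφdef
  have hφmono : StrictMono φ := Nat.nth_strictMono hp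
  have hφp : ∀ k, p (φ k) := fun k => Nat.nth_mem_of_infinite hp k
  have hφle : ∀ t : ℕ, φ t ≤ φ (t + 1) := fun t => (hφmono (Nat.lt_succ_self t)).le
  have hSle : ∀ (i : Fin l) (t : ℕ), S i (φ t) ≤ S i (φ (t + 1)) := by
    intro i t
    exact Finset.sum_le_sum_of_subset (Finset.range_subset_range.2 (hφle t))
  -- block sums divisible by n
  have hdvd : ∀ (i : Fin l) (t : ℕ), n ∣ (S i (φ (t + 1)) - S i (φ t)) := by
    intro i t
    have h1 : ((S i (φ t) : ZMod n)) = ((S i (φ (t + 1)) : ZMod n)) := by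
      have e1 := congrFun (hφp t) i
      have e2 := congrFun (hφp (t + 1)) i
      rw [e1, e2]
    have := (ZMod.natCast_eq_natCast_iff _ _ _).1 h1
    exact (Nat.modEq_iff_dvd' (hSle i t)).1 this
  -- divided block sums
  set w : Fin l → ℕ → ℕ := fun i t => (S i (φ (t + 1)) - S i (φ t)) / n with hwdef
  have hwmul : ∀ (i : Fin l) (t : ℕ), n * w i t = S i (φ (t + 1)) - S i (φ t) := by
    intro i t
    exact Nat.mul_div_cancel' (hdvd i t)
  -- block sum as Ico sum
  have hblock : ∀ (i : Fin l) (t : ℕ),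
      ∑ j ∈ Finset.Ico (φ t) (φ (t + 1)), x i j = S i (φ (t + 1)) - S i (φ t) := by
    intro i t
    have : S i (φ t) + ∑ j ∈ Finset.Ico (φ t) (φ (t + 1)), x i j = S i (φ (t + 1)) := by
      rw [hSdef]
      simp only [Finset.range_eq_Ico]
      exact Finset.sum_Ico_consecutive _ (Nat.zero_le _) (hφle t)
    omega
  -- the polynomial transform
  set R : Polynomial ℤ → Polynomial ℤ := fun P => X * ((P.divX).comp (C (n : ℤ) * X))
    with hRdef
  have hPeval : ∀ P : Polynomial ℤ, IsAdmissible P → ∀ y : ℤ, P.eval y = y * P.divX.eval y := by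
    intro P hP y
    conv_lhs => rw [← Polynomial.X_mul_divX_add P]
    have h0 : P.coeff 0 = 0 := by
      have := hP.1
      rwa [← Polynomial.coeff_zero_eq_eval_zero] at this
    simp [h0]
  have hRkey : ∀ P : Polynomial ℤ, IsAdmissible P → ∀ u : ℤ,
      (n : ℤ) * (R P).eval u = P.eval ((n : ℤ) * u) := by
    intro P hP u
    rw [hPeval P hP ((n : ℤ) * u)]
    simp [hRdef]
    ring
  have hRadm : ∀ P : Polynomial ℤ, IsAdmissible P → IsAdmissible (R P) := by
    intro P hP
    constructor
    · simp [hRdef]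
    · intro m
      have hkey := hRkey P hP (m : ℤ)
      have h2 : 0 ≤ P.eval ((n : ℤ) * m) := by
        have : ((n * m : ℕ) : ℤ) = (n : ℤ) * m := by push_cast; ring
        rw [← this]
        exact hP.2 (n * m)
      nlinarith [hkey, (by exact_mod_cast hn : (1 : ℤ) ≤ n)]
  -- apply hA
  obtain ⟨a, β, hβne, hmem⟩ := hA (F.image R)
    (by
      intro Q hQ
      obtain ⟨P, hPF, rfl⟩ := Finset.mem_image.1 hQ
      exact hRadm P (hF P hPF)) l w
  refine ⟨n * a, β.biUnion (fun t => Finset.Ico (φ t) (φ (t + 1))), ?_, ?_⟩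
  · obtain ⟨t, ht⟩ := hβne
    exact ⟨φ t, Finset.mem_biUnion.2 ⟨t, ht, Finset.mem_Ico.2 ⟨le_refl _, hφmono (Nat.lt_succ_self t)⟩⟩⟩
  · intro P hPF i
    have hPadm := hF P hPF
    -- disjointness of blocks
    have hdisj : (↑β : Set ℕ).PairwiseDisjoint (fun t => Finset.Ico (φ t) (φ (t + 1))) := by
      intro s _ t _ hst
      rcases lt_or_gt_of_ne hst with h | h
      · have h1 : φ (s + 1) ≤ φ t := hφmono.le_iff_le.2 h
        refine Finset.disjoint_left.2 ?_
        intro j hj hj'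
        simp only [Finset.mem_Ico] at hj hj'
        omega
      · have h1 : φ (t + 1) ≤ φ s := hφmono.le_iff_le.2 h
        refine Finset.disjoint_left.2 ?_
        intro j hj hj'
        simp only [Finset.mem_Ico] at hj hj'
        omega
    have hsum : ∑ j ∈ β.biUnion (fun t => Finset.Ico (φ t) (φ (t + 1))), x i j
        = n * ∑ t ∈ β, w i t := by
      rw [Finset.sum_biUnion hdisj, Finset.mul_sum]
      refine Finset.sum_congr rfl ?_
      intro t _
      rw [hblock i t, hwmul i t]
    set u : ℕ := ∑ t ∈ β, w i t with hudef
    have hmem' := hmem (R P) (Finset.mem_image.2 ⟨P, hPF, rfl⟩) i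
    set b : ℕ := ((a : ℤ) + (R P).eval ((u : ℕ) : ℤ)).toNat with hbdef
    have hbA : b ∈ A := hmem'
    refine ⟨b, hbA, ?_⟩
    have hnonneg : (0 : ℤ) ≤ (a : ℤ) + (R P).eval ((u : ℕ) : ℤ) := by
      have := (hRadm P hPadm).2 u
      positivity
    have hbval : (b : ℤ) = (a : ℤ) + (R P).eval ((u : ℕ) : ℤ) := Int.toNat_of_nonneg hnonneg
    have hcast : ((∑ j ∈ β.biUnion (fun t => Finset.Ico (φ t) (φ (t + 1))), x i j : ℕ) : ℤ)
        = (n : ℤ) * (u : ℤ) := by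
      rw [hsum]; push_cast; ring
    have : ((n * a : ℕ) : ℤ) + P.eval ((∑ j ∈ β.biUnion (fun t => Finset.Ico (φ t) (φ (t + 1))), x i j : ℕ) : ℤ)
        = ((n * b : ℕ) : ℤ) := by
      rw [hcast, ← hRkey P hPadm (u : ℤ)]
      push_cast [hbval]
      ring
    rw [this, Int.toNat_natCast]
end

section
/- If A ⊆ ℕ is a C_p-set and n ∈ ℕ with n ≥ 1, then n⁻¹·A = {x ∈ ℕ : n·x ∈ A} is a C_p-set. -/
open Polynomial

/-- Addition on βℕ: A ∈ p + q iff {x : {y : x + y ∈ A} ∈ q} ∈ p. -/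
def ufAdd (p q : Ultrafilter ℕ) : Ultrafilter ℕ :=
  p.bind fun x => q.map (x + ·)

/-- The set 𝒥_p of ultrafilters all of whose members are J_p-sets. -/
def JpUF : Set (Ultrafilter ℕ) := {p | ∀ A ∈ p, JpSet A}

def IsLeftIdeal (L : Set (Ultrafilter ℕ)) : Prop :=
  L.Nonempty ∧ ∀ p ∈ L, ∀ q : Ultrafilter ℕ, ufAdd q p ∈ L

def IsMinimalLeftIdeal (L : Set (Ultrafilter ℕ)) : Prop :=
  IsLeftIdeal L ∧ ∀ L' : Set (Ultrafilter ℕ), IsLeftIdeal L' → L' ⊆ L → L' = L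

def IsTwoSidedIdeal (I : Set (Ultrafilter ℕ)) : Prop :=
  I.Nonempty ∧ ∀ p ∈ I, ∀ q : Ultrafilter ℕ, ufAdd p q ∈ I ∧ ufAdd q p ∈ I

/-- The smallest two-sided ideal K(βℕ,+). -/
def smallestIdeal : Set (Ultrafilter ℕ) := ⋂₀ {I | IsTwoSidedIdeal I}

/-- A set is central if it belongs to a minimal idempotent, i.e. an idempotent
lying in the smallest ideal K(βℕ,+). -/
def IsCentralSet (A : Set ℕ) : Prop :=
  ∃ p ∈ smallestIdeal, ufAdd p p = p ∧ A ∈ p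

/-- A set is a C_p-set if it belongs to an idempotent ultrafilter in 𝒥_p. -/
def CpSet (A : Set ℕ) : Prop :=
  ∃ p : Ultrafilter ℕ, ufAdd p p = p ∧ (∀ B ∈ p, JpSet B) ∧ A ∈ p


lemma mem_ufAdd {p q : Ultrafilter ℕ} {s : Set ℕ} :
    s ∈ ufAdd p q ↔ {x | {y | x + y ∈ s} ∈ q} ∈ p := by
  simp [ufAdd, Ultrafilter.bind, Ultrafilter.mem_map, Filter.mem_bind']
  rfl

lemma jpSet_mono {B C : Set ℕ} (h : B ⊆ C) (hB : JpSet B) : JpSet C := by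
  intro F hF l x
  obtain ⟨a, β, hβ, hm⟩ := hB F hF l x
  exact ⟨a, β, hβ, fun P hP i => h (hm P hP i)⟩

lemma jpSet_of_mul {B : Set ℕ} {n : ℕ} (hn : 1 ≤ n) (h : JpSet ((n * ·) '' B)) :
    JpSet B := by
  intro F hF l x
  rcases Finset.eq_empty_or_nonempty F with hFe | ⟨P₀, hP₀⟩
  · exact ⟨0, {0}, ⟨0, Finset.mem_singleton_self 0⟩, by simp [hFe]⟩
  rcases Nat.eq_zero_or_pos l with hl | hl
  · exact ⟨0, {0}, ⟨0, Finset.mem_singleton_self 0⟩, by subst hl; exact fun P hP i => i.elim0⟩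
  set F' : Finset (Polynomial ℤ) := F.image (fun P => Polynomial.C (n : ℤ) * P) with hF'
  have hF'adm : ∀ P ∈ F', IsAdmissible P := by
    intro Q hQ
    simp only [hF', Finset.mem_image] at hQ
    obtain ⟨P, hP, rfl⟩ := hQ
    obtain ⟨h1, h2⟩ := hF P hP
    refine ⟨by simp [h1], fun m => ?_⟩
    simp only [Polynomial.eval_mul, Polynomial.eval_C]
    exact mul_nonneg (by positivity) (h2 m)
  obtain ⟨a', β, hβ, hm⟩ := h F' hF'adm l x
  have key : ∀ P ∈ F, ∀ i : Fin l,
      ∃ b ∈ B, ((a' : ℤ) + (n : ℤ) * P.eval ((∑ t ∈ β, x i t : ℕ) : ℤ)).toNat = n * b := by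
    intro P hP i
    have := hm (Polynomial.C (n : ℤ) * P) (Finset.mem_image_of_mem _ hP) i
    simp only [Polynomial.eval_mul, Polynomial.eval_C] at this
    obtain ⟨b, hb, hbe⟩ := this
    exact ⟨b, hb, hbe.symm⟩
  have hcast : ∀ P ∈ F, ∀ i : Fin l, ∀ b : ℕ,
      ((a' : ℤ) + (n : ℤ) * P.eval ((∑ t ∈ β, x i t : ℕ) : ℤ)).toNat = n * b →
      (a' : ℤ) + (n : ℤ) * P.eval ((∑ t ∈ β, x i t : ℕ) : ℤ) = (n : ℤ) * b := by
    intro P hP i b hb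
    have h0 : (0:ℤ) ≤ (a' : ℤ) + (n : ℤ) * P.eval ((∑ t ∈ β, x i t : ℕ) : ℤ) := by
      have := (hF P hP).2 (∑ t ∈ β, x i t)
      positivity
    have := Int.toNat_of_nonneg h0
    rw [hb] at this
    push_cast at this ⊢
    linarith
  -- n divides a'
  obtain ⟨b₀, _, hb₀⟩ := key P₀ hP₀ ⟨0, hl⟩
  have hdvd : (n : ℤ) ∣ (a' : ℤ) := by
    have := hcast P₀ hP₀ ⟨0, hl⟩ b₀ hb₀
    exact ⟨b₀ - P₀.eval ((∑ t ∈ β, x ⟨0, hl⟩ t : ℕ) : ℤ), by linarith [this]⟩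
  have hdvdn : n ∣ a' := by exact_mod_cast hdvd
  obtain ⟨a, rfl⟩ := hdvdn
  refine ⟨a, β, hβ, fun P hP i => ?_⟩
  obtain ⟨b, hbB, hb⟩ := key P hP i
  have heq := hcast P hP i b hb
  have hn0 : (n : ℤ) ≠ 0 := by exact_mod_cast Nat.one_le_iff_ne_zero.mp hn
  have : (a : ℤ) + P.eval ((∑ t ∈ β, x i t : ℕ) : ℤ) = (b : ℤ) := by
    have : (n : ℤ) * ((a : ℤ) + P.eval ((∑ t ∈ β, x i t : ℕ) : ℤ)) = (n : ℤ) * b := by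
      push_cast at heq ⊢; linarith
    exact mul_left_cancel₀ hn0 this
  rw [this]
  simpa using hbB

lemma mem_of_eqOn {p : Ultrafilter ℕ} {M X Y : Set ℕ} (hM : M ∈ p)
    (h : X ∩ M = Y ∩ M) (hX : X ∈ p) : Y ∈ p :=
  p.toFilter.sets_of_superset (by rw [← h]; exact p.toFilter.inter_sets hX hM)
    Set.inter_subset_left

lemma mem_iff_of_eqOn {p : Ultrafilter ℕ} {M X Y : Set ℕ} (hM : M ∈ p)
    (h : X ∩ M = Y ∩ M) : X ∈ p ↔ Y ∈ p :=
  ⟨mem_of_eqOn hM h, mem_of_eqOn hM h.symm⟩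

lemma multiples_mem {p : Ultrafilter ℕ} (hp : ufAdd p p = p) (n : ℕ) (hn : 1 ≤ n) :
    {x : ℕ | x % n = 0} ∈ p := by
  have hfin : Set.Finite ((· % n) '' Set.univ : Set ℕ) := by
    apply Set.Finite.subset (Set.finite_Iio n)
    rintro _ ⟨x, -, rfl⟩
    exact Nat.mod_lt x hn
  obtain ⟨c, hc, hpc⟩ := Ultrafilter.eq_pure_of_finite_mem (f := p.map (· % n)) hfin
    (Ultrafilter.mem_map.2 (Filter.univ_mem' fun x => Set.mem_image_of_mem _ trivial))
  obtain ⟨x, -, hx⟩ := hc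
  have hcn : c < n := hx ▸ Nat.mod_lt x hn
  have hR : {x : ℕ | x % n = c} ∈ p := by
    have : {c} ∈ p.map (· % n) := hpc ▸ (Ultrafilter.mem_pure.2 rfl)
    simpa [Set.preimage, Set.mem_singleton_iff] using Ultrafilter.mem_map.1 this
  have hR2 : {x : ℕ | x % n = c} ∈ ufAdd p p := hp.symm ▸ hR
  rw [mem_ufAdd] at hR2
  -- pick u with u % n = c and the inner set in p
  have h1 : ({x | {y | x + y ∈ {x : ℕ | x % n = c}} ∈ p} ∩ {x : ℕ | x % n = c}).Nonempty :=
    Ultrafilter.nonempty_of_mem (p.toFilter.inter_sets hR2 hR)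
  obtain ⟨u, hu1, hu2⟩ := h1
  have h2 : ({y | u + y ∈ {x : ℕ | x % n = c}} ∩ {x : ℕ | x % n = c}).Nonempty :=
    Ultrafilter.nonempty_of_mem (p.toFilter.inter_sets hu1 hR)
  obtain ⟨v, hv1, hv2⟩ := h2
  have h2c : (c + c) % n = c := by
    have : (u + v) % n = c := hv1
    rwa [Nat.add_mod, hu2, hv2] at this
  have hc0 : c = 0 := by
    rcases Nat.lt_or_ge (c + c) n with h | h
    · rw [Nat.mod_eq_of_lt h] at h2c; omega
    · have h2n : c + c - n < n := by omega
      rw [Nat.mod_eq_sub_mod h, Nat.mod_eq_of_lt h2n] at h2c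
      omega
  subst hc0
  exact hR

theorem cpSet_div (A : Set ℕ) (hA : CpSet A) (n : ℕ) (hn : 1 ≤ n) :
    CpSet {x : ℕ | n * x ∈ A} := by
  obtain ⟨p, hidem, hjp, hAp⟩ := hA
  have hM : {x : ℕ | x % n = 0} ∈ p := multiples_mem hidem n hn
  set M : Set ℕ := {x : ℕ | x % n = 0} with hMdef
  set q : Ultrafilter ℕ := p.map (· / n) with hq
  have memq : ∀ B : Set ℕ, B ∈ q ↔ {w : ℕ | w / n ∈ B} ∈ p := fun B => Ultrafilter.mem_map
  have hdivmul : ∀ w ∈ M, n * (w / n) = w := by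
    intro w hw; exact Nat.mul_div_cancel' (Nat.dvd_of_mod_eq_zero hw)
  have hn' : 0 < n := hn
  have hadd : ∀ u v : ℕ, u % n = 0 → v % n = 0 → (u + v) / n = u / n + v / n := by
    intro u v hu hv
    obtain ⟨a, rfl⟩ := Nat.dvd_of_mod_eq_zero hu
    obtain ⟨b, rfl⟩ := Nat.dvd_of_mod_eq_zero hv
    rw [← Nat.mul_add, Nat.mul_div_cancel_left _ hn', Nat.mul_div_cancel_left _ hn',
      Nat.mul_div_cancel_left _ hn']
  refine ⟨q, ?_, ?_, ?_⟩
  · -- idempotent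
    apply Ultrafilter.coe_injective
    ext B
    show B ∈ ufAdd q q ↔ B ∈ q
    rw [mem_ufAdd]
    simp only [memq, Set.mem_setOf_eq]
    -- goal: {w | {v | w/n + v/n ∈ B} ∈ p} ∈ p ↔ {w | w/n ∈ B} ∈ p
    have hRHS : {w : ℕ | w / n ∈ B} ∈ p ↔ {u : ℕ | {v : ℕ | (u + v) / n ∈ B} ∈ p} ∈ p := by
      conv_lhs => rw [← hidem]
      rw [mem_ufAdd]
      simp only [Set.mem_setOf_eq]
    rw [hRHS]
    refine mem_iff_of_eqOn hM ?_
    ext u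
    simp only [Set.mem_inter_iff, Set.mem_setOf_eq]
    refine and_congr_left fun hu => mem_iff_of_eqOn hM ?_
    ext v
    simp only [Set.mem_inter_iff, Set.mem_setOf_eq]
    exact and_congr_left fun hv => by rw [hadd u v hu hv]
  · -- members are Jp sets
    intro B hB
    rw [memq] at hB
    have hS : {w : ℕ | w / n ∈ B} ∩ M ∈ p := p.toFilter.inter_sets hB hM
    have hsub : {w : ℕ | w / n ∈ B} ∩ M ⊆ (n * ·) '' B := by
      rintro w ⟨hw1, hw2⟩
      exact ⟨w / n, hw1, hdivmul w hw2⟩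
    exact jpSet_of_mul hn (jpSet_mono hsub (hjp _ hS))
  · -- membership
    rw [memq]
    refine mem_of_eqOn hM ?_ hAp
    ext w
    simp only [Set.mem_inter_iff, Set.mem_setOf_eq]
    constructor
    · rintro ⟨h1, h2⟩; exact ⟨by rwa [hdivmul w h2], h2⟩
    · rintro ⟨h1, h2⟩; exact ⟨by rwa [hdivmul w h2] at h1, h2⟩
end

section
/- Every subset of ℕ with positive upper Banach density is a J_p-set, assuming the multidimensional IP polynomial Szemerédi theorem. -/
open Polynomial

/-- An admissible multivariate polynomial : vanishes at 0 and maps ℕ^j into ℕ. -/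
def MvAdmissible {j : ℕ} (f : MvPolynomial (Fin j) ℤ) : Prop :=
  MvPolynomial.eval (fun _ => (0 : ℤ)) f = 0 ∧
    ∀ v : Fin j → ℕ, 0 ≤ MvPolynomial.eval (fun i => (v i : ℤ)) f


/-- B ⊆ ℕ has positive upper Banach density. -/
def PosUpperBanachDensity (B : Set ℕ) : Prop :=
  ∃ δ : ℝ, 0 < δ ∧ ∀ N : ℕ, ∃ n ≥ N, 0 < n ∧
    ∃ m : ℕ, δ * n ≤ (Nat.card ↥(B ∩ Set.Ioc m (m + n)) : ℝ)

theorem banachDensity_isJpSet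
    (hSz : ∀ B : Set ℕ, PosUpperBanachDensity B →
      ∀ l : ℕ, ∀ G : Finset (MvPolynomial (Fin l) ℤ), (∀ g ∈ G, MvAdmissible g) →
      ∀ y : ℕ → Fin l → ℕ,
      ∃ x : ℕ, ∃ α : Finset ℕ, α.Nonempty ∧
        ∀ g ∈ G,
          ((x : ℤ) + MvPolynomial.eval (fun i => ((∑ t ∈ α, y t i : ℕ) : ℤ)) g).toNat ∈ B)
    (A : Set ℕ) (hA : PosUpperBanachDensity A) : JpSet A := by
  intro F hF l x
  classical
  -- build multivariate polynomials g_{P,i} = P(X i)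
  set G : Finset (MvPolynomial (Fin l) ℤ) :=
    (F ×ˢ (Finset.univ : Finset (Fin l))).image
      (fun p => Polynomial.aeval (MvPolynomial.X p.2) p.1) with hG
  have hkey : ∀ (P : Polynomial ℤ) (i : Fin l) (v : Fin l → ℤ),
      MvPolynomial.eval v (Polynomial.aeval (MvPolynomial.X i) P) = P.eval (v i) := by
    intro P i v
    rw [Polynomial.aeval_def, Polynomial.eval₂_eq_sum, Polynomial.eval_eq_sum]
    simp [Polynomial.sum, map_sum]
  have hGadm : ∀ g ∈ G, MvAdmissible g := by
    intro g hg
    simp only [hG, Finset.mem_image, Finset.mem_product] at hg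
    obtain ⟨⟨P, i⟩, ⟨hP, -⟩, rfl⟩ := hg
    obtain ⟨h0, hpos⟩ := hF P hP
    constructor
    · rw [hkey]; exact h0
    · intro v; rw [hkey]; exact hpos (v i)
  obtain ⟨a, α, hne, hmem⟩ := hSz A hA l G hGadm (fun t i => x i t)
  refine ⟨a, α, hne, fun P hP i => ?_⟩
  have := hmem (Polynomial.aeval (MvPolynomial.X i) P)
    (by simp only [hG, Finset.mem_image]
        exact ⟨(P, i), by simp [hP], rfl⟩)
  rwa [hkey] at this
end
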